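/- Let M = {S_1,...,S_n} be a collection of n i.i.d. random variables uniformly distributed on (0,1), let μ ∈ (0,1/2), and let r = ⌊n^{1-μ}⌋. Then the probability that for every i ∈ {1,...,r} the number of elements of M that are at most i/r is at least (n/2)·(i/r) is bounded below by 1 - n^{1-μ}·exp(-n^μ/8). -/

import Mathlib

open MeasureTheory ProbabilityTheory
open scoped ENNReal
open scoped Classical

lemma unif_int (c p : ℝ) (hp0 : 0 ≤ p) (hp1 : p ≤ 1) :
    ∫ x in Set.Ioo (0:ℝ) 1, (if x ≤ p then c else 1) = p * c + (1 - p) := by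
  rw [← MeasureTheory.integral_Ioc_eq_integral_Ioo,
      ← Set.Ioc_union_Ioc_eq_Ioc hp0 hp1,
      MeasureTheory.setIntegral_union (Set.Ioc_disjoint_Ioc_of_le le_rfl) measurableSet_Ioc
        ((integrableOn_congr_fun (fun x hx => if_pos hx.2) measurableSet_Ioc).2
          (integrableOn_const measure_Ioc_lt_top.ne))
        ((integrableOn_congr_fun (fun x hx => if_neg (not_le.2 hx.1)) measurableSet_Ioc).2
          (integrableOn_const measure_Ioc_lt_top.ne))]
  rw [setIntegral_congr_fun measurableSet_Ioc (fun x hx => if_pos hx.2),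
      setIntegral_congr_fun measurableSet_Ioc (fun x hx => if_neg (not_le.2 hx.1)),
      setIntegral_const, setIntegral_const]
  simp [Real.volume_Ioc, ENNReal.toReal_ofReal hp0,
    ENNReal.toReal_ofReal (by linarith : (0:ℝ) ≤ 1 - p), max_eq_left hp0,
    max_eq_left (by linarith : (0:ℝ) ≤ 1 - p)]

lemma chernoff {Ω : Type*} [MeasurableSpace Ω] (P : Measure Ω) [IsProbabilityMeasure P]
    (n : ℕ) (S : Fin n → Ω → ℝ) (hmeas : ∀ i, Measurable (S i))
    (hindep : iIndepFun S P)
    (hunif : ∀ i, P.map (S i) = volume.restrict (Set.Ioo (0 : ℝ) 1))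
    (p : ℝ) (hp0 : 0 ≤ p) (hp1 : p ≤ 1) :
    P {ω | (∑ j : Fin n, (if S j ω ≤ p then (1:ℝ) else 0)) ≤ (n * p)/2} ≤
      ENNReal.ofReal (Real.exp (-(n * p)/8)) := by
  set t : ℝ := -Real.log 2 with ht_def
  have ht : t ≤ 0 := neg_nonpos.2 (Real.log_nonneg one_le_two)
  have het : Real.exp t = 1/2 := by
    rw [ht_def, Real.exp_neg, Real.exp_log two_pos]; norm_num
  set X : Fin n → Ω → ℝ := fun j ω => if S j ω ≤ p then 1 else 0 with hX_def
  have hXm : ∀ j, Measurable (X j) := fun j =>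
    Measurable.ite (measurableSet_le (hmeas j) measurable_const)
      measurable_const measurable_const
  have hXind : iIndepFun X P := by
    exact hindep.comp (fun _ x => if x ≤ p then 1 else 0)
      (fun _ => Measurable.ite measurableSet_Iic measurable_const measurable_const)
  set Y : Ω → ℝ := fun ω => ∑ j : Fin n, X j ω with hY_def
  have hYm : Measurable Y := Finset.measurable_sum Finset.univ (fun j _ => hXm j)
  have hY0 : ∀ ω, 0 ≤ Y ω := fun ω =>
    Finset.sum_nonneg fun j _ => by dsimp [X]; split <;> norm_num
  -- mgf of a single indicator
  have hmgf_one : ∀ j, mgf (X j) P t = p * Real.exp t + (1 - p) := by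
    intro j
    have hco : (fun ω => Real.exp (t * X j ω)) =
        (fun x => if x ≤ p then Real.exp t else 1) ∘ (S j) := by
      funext ω
      by_cases h : S j ω ≤ p <;> simp [X, h, Function.comp]
    have hgm : Measurable (fun x : ℝ => if x ≤ p then Real.exp t else 1) :=
      Measurable.ite measurableSet_Iic measurable_const measurable_const
    have hmap : mgf (X j) P t = ∫ x, (if x ≤ p then Real.exp t else 1) ∂(P.map (S j)) := by
      rw [mgf, hco]
      exact (integral_map (hmeas j).aemeasurable hgm.aestronglyMeasurable).symm
    rw [hmap, hunif j, unif_int _ _ hp0 hp1]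
  -- mgf of the sum
  have hmgf_sum : mgf Y P t = (p * Real.exp t + (1 - p))^n := by
    have : Y = ∑ j : Fin n, X j := by funext ω; simp [hY_def, Finset.sum_apply]
    rw [this, hXind.mgf_sum hXm]
    simp [hmgf_one]
  -- integrability
  have hint : Integrable (fun ω => Real.exp (t * Y ω)) P := by
    refine Integrable.mono' (integrable_const 1)
      ((hYm.const_mul t).exp.aestronglyMeasurable) (ae_of_all _ fun ω => ?_)
    rw [Real.norm_eq_abs, abs_of_pos (Real.exp_pos _), ← Real.exp_zero]
    exact Real.exp_le_exp.2 (mul_nonpos_of_nonpos_of_nonneg ht (hY0 ω))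
  have hch := measure_le_le_exp_mul_mgf (X := Y) (μ := P) ((n : ℝ) * p / 2) ht hint
  rw [hmgf_sum, het] at hch
  -- numeric bound
  have hnum : Real.exp (-t * ((n:ℝ) * p / 2)) * (p * (1/2) + (1 - p))^n ≤
      Real.exp (-(↑n * p) / 8) := by
    have hb : p * (1/2) + (1 - p) = 1 - p/2 := by ring
    have h1 : (1 - p/2 : ℝ) ≤ Real.exp (-(p/2)) := by
      have := Real.add_one_le_exp (-(p/2)); linarith
    have h2 : (1 - p/2 : ℝ)^n ≤ Real.exp (-(p/2))^n :=
      pow_le_pow_left₀ (by linarith) h1 n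
    rw [hb, ← Real.exp_nat_mul] at *
    calc Real.exp (-t * ((n:ℝ) * p / 2)) * (1 - p/2)^n
        ≤ Real.exp (-t * ((n:ℝ) * p / 2)) * Real.exp ((n:ℝ) * (-(p/2))) := by
          exact mul_le_mul_of_nonneg_left h2 (Real.exp_pos _).le
      _ = Real.exp (-t * ((n:ℝ) * p / 2) + (n:ℝ) * (-(p/2))) := (Real.exp_add _ _).symm
      _ ≤ Real.exp (-(↑n * p) / 8) := by
          apply Real.exp_le_exp.2
          have hlog : Real.log 2 < 0.6931471808 := Real.log_two_lt_d9
          have hnp : 0 ≤ (n:ℝ) * p := mul_nonneg (Nat.cast_nonneg n) hp0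
          rw [ht_def]
          nlinarith
  -- conclude
  have hset : {ω | (∑ j : Fin n, (if S j ω ≤ p then (1:ℝ) else 0)) ≤ (n * p)/2}
      = {ω | Y ω ≤ (n:ℝ) * p / 2} := rfl
  rw [hset]
  have hfin : P {ω | Y ω ≤ (n:ℝ) * p / 2} ≠ ⊤ := measure_ne_top _ _
  rw [← ENNReal.ofReal_toReal hfin]
  exact ENNReal.ofReal_le_ofReal (hch.trans hnum)

open scoped Classical in
/-- A collection of `n` i.i.d. Uniform(0,1) random variables is μ-regular with
probability at least `1 - n^{1-μ} exp(-n^μ/8)`. -/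
theorem stmt0 {Ω : Type*} [MeasurableSpace Ω] (P : Measure Ω) [IsProbabilityMeasure P]
    (n : ℕ) (μ : ℝ) (hμ : μ ∈ Set.Ioo (0 : ℝ) (1 / 2))
    (S : Fin n → Ω → ℝ) (hmeas : ∀ i, Measurable (S i))
    (hindep : iIndepFun S P)
    (hunif : ∀ i, P.map (S i) = volume.restrict (Set.Ioo (0 : ℝ) 1)) :
    ENNReal.ofReal (1 - (n : ℝ) ^ (1 - μ) * Real.exp (-(n : ℝ) ^ μ / 8)) ≤
      P {ω | ∀ i ∈ Finset.Icc 1 (⌊(n : ℝ) ^ (1 - μ)⌋₊),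
        ((n : ℝ) / 2) * ((i : ℝ) / (⌊(n : ℝ) ^ (1 - μ)⌋₊ : ℝ)) ≤
          ((Finset.univ.filter
            (fun j : Fin n => S j ω ≤ (i : ℝ) / (⌊(n : ℝ) ^ (1 - μ)⌋₊ : ℝ))).card : ℝ)} := by
  obtain ⟨hμ0, hμ2⟩ := hμ
  set r : ℕ := ⌊(n : ℝ) ^ (1 - μ)⌋₊ with hr_def
  have hb0 : 0 ≤ (n : ℝ) ^ (1 - μ) * Real.exp (-(n : ℝ) ^ μ / 8) :=
    mul_nonneg (Real.rpow_nonneg (Nat.cast_nonneg n) _) (Real.exp_pos _).le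
  rcases Nat.eq_zero_or_pos r with hr0 | hrpos
  · -- r = 0 : the event is everything
    have : {ω : Ω | ∀ i ∈ Finset.Icc 1 r,
        ((n : ℝ) / 2) * ((i : ℝ) / (r : ℝ)) ≤
          ((Finset.univ.filter (fun j : Fin n => S j ω ≤ (i : ℝ) / (r : ℝ))).card : ℝ)}
        = Set.univ := by
      ext ω; simp [hr0]
    rw [this, measure_univ]
    exact ENNReal.ofReal_le_one.2 (by linarith)
  -- r ≥ 1
  have hrR : (0 : ℝ) < r := by exact_mod_cast hrpos
  have hrle : (r : ℝ) ≤ (n : ℝ) ^ (1 - μ) := Nat.floor_le (Real.rpow_nonneg (Nat.cast_nonneg n) _)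
  have hn1 : 1 ≤ n := by
    by_contra h
    push_neg at h
    interval_cases n
    simp [Real.zero_rpow (by linarith : (1:ℝ) - μ ≠ 0)] at hr_def
    omega
  have hnR : (0 : ℝ) < n := by exact_mod_cast hn1
  -- counting function
  set N : ℕ → Ω → ℝ := fun i ω => ∑ j : Fin n, (if S j ω ≤ (i : ℝ) / (r : ℝ) then (1:ℝ) else 0)
    with hN_def
  have hcard : ∀ (i : ℕ) (ω : Ω),
      ((Finset.univ.filter (fun j : Fin n => S j ω ≤ (i : ℝ) / (r : ℝ))).card : ℝ) = N i ω := by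
    intro i ω
    rw [Finset.card_filter]
    push_cast
    rfl
  have hNm : ∀ i : ℕ, Measurable (N i) := by
    intro i
    exact Finset.measurable_sum Finset.univ (fun j _ =>
      Measurable.ite (measurableSet_le (hmeas j) measurable_const)
        measurable_const measurable_const)
  set G : Set Ω := {ω | ∀ i ∈ Finset.Icc 1 r, ((n : ℝ) / 2) * ((i : ℝ) / (r : ℝ)) ≤ N i ω}
    with hG_def
  have hGeq : {ω : Ω | ∀ i ∈ Finset.Icc 1 r,
        ((n : ℝ) / 2) * ((i : ℝ) / (r : ℝ)) ≤
          ((Finset.univ.filter (fun j : Fin n => S j ω ≤ (i : ℝ) / (r : ℝ))).card : ℝ)} = G := by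
    ext ω
    simp only [hG_def, Set.mem_setOf_eq, hcard]
  rw [hGeq]
  have hGm : MeasurableSet G := by
    have : G = ⋂ i ∈ Finset.Icc 1 r, {ω | ((n : ℝ) / 2) * ((i : ℝ) / (r : ℝ)) ≤ N i ω} := by
      ext ω; simp [hG_def]
    rw [this]
    exact MeasurableSet.biInter (Set.to_countable _)
      (fun i _ => measurableSet_le measurable_const (hNm i))
  -- bad events
  have hbad : ∀ i ∈ Finset.Icc 1 r,
      P {ω | N i ω ≤ ((n : ℝ) * ((i : ℝ) / (r : ℝ))) / 2} ≤
        ENNReal.ofReal (Real.exp (-(n : ℝ) ^ μ / 8)) := by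
    intro i hi
    rw [Finset.mem_Icc] at hi
    have hi1 : (1 : ℝ) ≤ (i : ℝ) := by exact_mod_cast hi.1
    have hir : (i : ℝ) ≤ (r : ℝ) := by exact_mod_cast hi.2
    have hp0 : (0 : ℝ) ≤ (i : ℝ) / (r : ℝ) := by positivity
    have hp1 : (i : ℝ) / (r : ℝ) ≤ 1 := by rw [div_le_one hrR]; exact hir
    refine (chernoff P n S hmeas hindep hunif _ hp0 hp1).trans ?_
    apply ENNReal.ofReal_le_ofReal
    apply Real.exp_le_exp.2
    rw [div_le_div_iff_of_pos_right (by norm_num), neg_le_neg_iff]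
    -- n ^ μ ≤ n * (i / r)
    have h1 : (n : ℝ) ^ μ = (n : ℝ) / (n : ℝ) ^ (1 - μ) := by
      rw [eq_div_iff (by positivity), ← Real.rpow_add hnR,
        show μ + (1 - μ) = 1 by ring, Real.rpow_one]
    have h2 : (n : ℝ) / (n : ℝ) ^ (1 - μ) ≤ (n : ℝ) / (r : ℝ) :=
      div_le_div_of_nonneg_left hnR.le hrR hrle
    have h3 : (n : ℝ) / (r : ℝ) ≤ (n : ℝ) * ((i : ℝ) / (r : ℝ)) := by
      rw [div_eq_mul_one_div]
      gcongr
    linarith [h1, h2, h3]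
  -- union bound
  have hcompl : Gᶜ ⊆ ⋃ i ∈ Finset.Icc 1 r, {ω | N i ω ≤ ((n : ℝ) * ((i : ℝ) / (r : ℝ))) / 2} := by
    intro ω hω
    simp only [hG_def, Set.mem_compl_iff, Set.mem_setOf_eq, not_forall] at hω
    obtain ⟨i, hi, hlt⟩ := hω
    push_neg at hlt
    refine Set.mem_biUnion hi ?_
    simp only [Set.mem_setOf_eq]
    nlinarith [hlt]
  have hPc : P Gᶜ ≤ ENNReal.ofReal ((n : ℝ) ^ (1 - μ) * Real.exp (-(n : ℝ) ^ μ / 8)) := by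
    calc P Gᶜ ≤ ∑ i ∈ Finset.Icc 1 r, P {ω | N i ω ≤ ((n : ℝ) * ((i : ℝ) / (r : ℝ))) / 2} :=
          (measure_mono hcompl).trans (measure_biUnion_finset_le _ _)
      _ ≤ ∑ _i ∈ Finset.Icc 1 r, ENNReal.ofReal (Real.exp (-(n : ℝ) ^ μ / 8)) :=
          Finset.sum_le_sum hbad
      _ = (r : ℝ≥0∞) * ENNReal.ofReal (Real.exp (-(n : ℝ) ^ μ / 8)) := by
          rw [Finset.sum_const, Nat.card_Icc]
          simp [nsmul_eq_mul]
      _ ≤ ENNReal.ofReal ((n : ℝ) ^ (1 - μ) * Real.exp (-(n : ℝ) ^ μ / 8)) := by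
          rw [← ENNReal.ofReal_natCast, ← ENNReal.ofReal_mul (Nat.cast_nonneg r)]
          exact ENNReal.ofReal_le_ofReal
            (mul_le_mul_of_nonneg_right hrle (Real.exp_pos _).le)
  have hPG : P G = 1 - P Gᶜ := by
    have := prob_compl_eq_one_sub (μ := P) hGm.compl
    rwa [compl_compl] at this
  rw [hPG, ENNReal.ofReal_sub _ hb0, ENNReal.ofReal_one]
  exact tsub_le_tsub_left hPc 1
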